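/- For all coefficient sequences a, b, the ψ-derivative of the Ward product satisfies the ψ-Leibniz rule D(a·b) = a ∗_{1,0} (D b) + (D a)·b. -/

import Mathlib

open Finset

/-- The ψ-factorial: ψₙ! = ψ₁ψ₂⋯ψₙ, with ψ₀! = 1. -/
noncomputable def psiFact (ψ : ℕ → ℂ) : ℕ → ℂ
  | 0 => 1
  | n + 1 => psiFact ψ n * ψ (n + 1)

/-- The ψ-binomial coefficient binomψ(n,k) = ψₙ!/(ψₖ!·ψ_{n−k}!). -/
noncomputable def psiBinom (ψ : ℕ → ℂ) (n k : ℕ) : ℂ :=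
  psiFact ψ n / (psiFact ψ k * psiFact ψ (n - k))

/-- The Fontané numbers F(n,k) = (ψₙ − ψₖ)/ψ_{n−k}. -/
noncomputable def Fker (ψ : ℕ → ℂ) (n k : ℕ) : ℂ :=
  (ψ n - ψ k) / ψ (n - k)

/-- The Ward product of coefficient sequences. -/
noncomputable def wardMul (ψ : ℕ → ℂ) (a b : ℕ → ℂ) (n : ℕ) : ℂ :=
  ∑ k ∈ Finset.range (n + 1), psiBinom ψ n k * a k * b (n - k)

/-- The Fontané product ∗_{i,j} of coefficient sequences. -/
noncomputable def fontane (ψ : ℕ → ℂ) (i j : ℕ) (a b : ℕ → ℂ) (n : ℕ) : ℂ :=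
  ∑ k ∈ Finset.range (n + 1), Fker ψ (n + i) (k + j) * psiBinom ψ n k * a k * b (n - k)

/-- The ψ-derivative on coefficient sequences: the shift (D a)ₙ = a_{n+1}. -/
def Dpsi (a : ℕ → ℂ) (n : ℕ) : ℂ := a (n + 1)


lemma psiFact_ne_zero (ψ : ℕ → ℂ) (hψ : ∀ n : ℕ, 1 ≤ n → ψ n ≠ 0) :
    ∀ m, psiFact ψ m ≠ 0 := by
  intro m
  induction m with
  | zero => simp [psiFact]
  | succ k ih =>
    simp only [psiFact]
    exact mul_ne_zero ih (hψ (k+1) (Nat.le_add_left 1 k))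

/-- The ψ-Leibniz rule: D(a·b) = a ∗_{1,0} (D b) + (D a)·b. -/
theorem Dpsi_wardMul (ψ : ℕ → ℂ) (hψ0 : ψ 0 = 0) (hψ1 : ψ 1 = 1) (hψ : ∀ n : ℕ, 1 ≤ n → ψ n ≠ 0)
    (a b : ℕ → ℂ) (n : ℕ) :
    Dpsi (wardMul ψ a b) n
      = fontane ψ 1 0 a (Dpsi b) n + wardMul ψ (Dpsi a) b n := by
  have hF := psiFact_ne_zero ψ hψ
  simp only [Dpsi, wardMul, fontane]
  -- LHS: sum over range (n+2)
  rw [Finset.sum_range_succ' (fun k => psiBinom ψ (n+1) k * a k * b (n+1-k)) (n+1)]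
  -- now LHS = ∑ k in range (n+1), binom(n+1,k+1) a(k+1) b(n-k) + binom(n+1,0) a0 b(n+1)
  rw [Finset.sum_range_succ (fun k => psiBinom ψ (n+1) (k+1) * a (k+1) * b (n+1-(k+1)))]
  rw [Finset.sum_range_succ (fun k => psiBinom ψ n k * a (k+1) * b (n-k))]
  rw [Finset.sum_range_succ' (fun k => Fker ψ (n+1) (k+0) * psiBinom ψ n k * a k * b (n-k+1)) n]
  have h00 : psiBinom ψ (n+1) 0 = Fker ψ (n+1) 0 * psiBinom ψ n 0 := by
    have e1 : psiFact ψ (n+1) = psiFact ψ n * ψ (n+1) := rfl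
    simp only [psiBinom, Fker, Nat.sub_zero, hψ0, sub_zero, e1]
    simp only [psiFact]
    field_simp [hF n, hψ (n+1) (Nat.le_add_left 1 n)]
  have hnn : psiBinom ψ (n+1) (n+1) = psiBinom ψ n n := by
    have e1 : psiFact ψ (n+1) = psiFact ψ n * ψ (n+1) := rfl
    simp only [psiBinom, Nat.sub_self, e1]
    simp only [psiFact]
    field_simp [hF n, hψ (n+1) (Nat.le_add_left 1 n)]
  have key : ∀ k ∈ Finset.range n,
      psiBinom ψ (n+1) (k+1) * a (k+1) * b (n+1-(k+1))
        = Fker ψ (n+1) (k+1+0) * psiBinom ψ n (k+1) * a (k+1) * b (n-(k+1)+1)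
          + psiBinom ψ n k * a (k+1) * b (n-k) := by
    intro k hk
    rw [Finset.mem_range] at hk
    have h1 : n + 1 - (k+1) = n - k := by omega
    have h2 : n - (k+1) + 1 = n - k := by omega
    have h3 : n - k = (n - k - 1) + 1 := by omega
    have h4 : n - (k+1) = n - k - 1 := by omega
    rw [h1, h2]
    have hbn : psiBinom ψ (n+1) (k+1) = Fker ψ (n+1) (k+1+0) * psiBinom ψ n (k+1) + psiBinom ψ n k := by
      simp only [psiBinom, Fker, Nat.add_zero]
      have e1 : psiFact ψ (n+1) = psiFact ψ n * ψ (n+1) := rfl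
      have e2 : psiFact ψ (k+1) = psiFact ψ k * ψ (k+1) := rfl
      have e3 : psiFact ψ (n-k) = psiFact ψ (n-k-1) * ψ (n-k) := by
        rw [h3]; rfl
      have e5 : n + 1 - (k+1) = n - k := h1
      rw [e1, e2, h4, e5, e3]
      have hnk : ψ (n - k) ≠ 0 := by
        apply hψ; omega
      have hk1 : ψ (k+1) ≠ 0 := hψ _ (Nat.le_add_left 1 k)
      have hn1 : ψ (n+1) ≠ 0 := hψ _ (Nat.le_add_left 1 n)
      have abs : ∀ (P Q R x y z : ℂ), P ≠ 0 → Q ≠ 0 → x ≠ 0 → y ≠ 0 →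
          R * z / (P * x * (Q * y)) = (z - x) / y * (R / (P * x * Q)) + R / (P * (Q * y)) := by
        intros P Q R x y z hP hQ hx hy
        have hyPxQ : y * (P * x * Q) ≠ 0 := mul_ne_zero hy (mul_ne_zero (mul_ne_zero hP hx) hQ)
        have hPQy : P * (Q * y) ≠ 0 := mul_ne_zero hP (mul_ne_zero hQ hy)
        have hPxQy : P * x * (Q * y) ≠ 0 := mul_ne_zero (mul_ne_zero hP hx) (mul_ne_zero hQ hy)
        rw [div_mul_div_comm, div_add_div _ _ hyPxQ hPQy, div_eq_div_iff hPxQy (mul_ne_zero hyPxQ hPQy)]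
        ring
      exact abs _ _ _ _ _ _ (hF k) (hF (n-k-1)) hk1 hnk
    rw [hbn]; ring
  rw [Finset.sum_congr rfl key, Finset.sum_add_distrib, h00, hnn]
  simp only [Nat.sub_zero, Nat.sub_self, Nat.add_comm 1 n]
  ring
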